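/- For every f ≥ 1, ε ∈ (0,1], and δℓ > 0 there exists δc > 0 with the following property. Let P₁,…,Pₙ ⊆ [0,1]² be pairwise disjoint convex sets such that for each i there exist a point cᵢ ∈ ℝ² and a radius ρᵢ ≥ δℓ with the closed Euclidean disk of radius ρᵢ centered at cᵢ contained in Pᵢ, and such that Pᵢ is contained in some closed disk of radius f·ρᵢ. Then there exist translation vectors v₁,…,vₙ ∈ ℝ² such that the translates vᵢ + Pᵢ are pairwise disjoint, each contained in [0,1+ε]², and no closed grid square [j·δc,(j+1)·δc] × [k·δc,(k+1)·δc] (with j,k ∈ ℤ) intersects two distinct translates. -/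
import Mathlib


open Metric Set
open scoped Pointwise

noncomputable section

/-- The plane ℝ² with the Euclidean metric. -/
abbrev Plane := EuclideanSpace ℝ (Fin 2)

/-- The axis-parallel square `[0,t] × [0,t]` in the plane. -/
def square (t : ℝ) : Set Plane := {x | x 0 ∈ Icc (0:ℝ) t ∧ x 1 ∈ Icc (0:ℝ) t}

/-- The closed grid square `[j·δc,(j+1)·δc] × [k·δc,(k+1)·δc]`. -/
def gridSquare (δc : ℝ) (j k : ℤ) : Set Plane :=
  {x | x 0 ∈ Icc ((j:ℝ) * δc) (((j:ℝ) + 1) * δc) ∧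
       x 1 ∈ Icc ((k:ℝ) * δc) (((k:ℝ) + 1) * δc)}

/-- Key inclusion: if a convex set `P` contains a ball of radius `ρ ≥ δℓ` around `c`,
then translating `P` by `ε • c` and fattening by `ε*δℓ` stays inside `(1+ε) • P`. -/
lemma keyMem (ε δℓ ρ : ℝ) (hε : 0 < ε) (hρ : δℓ ≤ ρ)
    (P : Set Plane) (hconv : Convex ℝ P) (c : Plane)
    (hball : closedBall c ρ ⊆ P) {x y : Plane} (hx : x ∈ P)
    (hy : ‖y‖ ≤ ε * δℓ) : ε • c + x + y ∈ (1 + ε) • P := by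
  have h1 : (0:ℝ) < 1 + ε := by linarith
  have hc : c + ε⁻¹ • y ∈ P := by
    apply hball
    rw [mem_closedBall, dist_eq_norm, add_sub_cancel_left, norm_smul,
      Real.norm_eq_abs, abs_of_pos (by positivity)]
    calc ε⁻¹ * ‖y‖ ≤ ε⁻¹ * (ε * δℓ) := by
          exact mul_le_mul_of_nonneg_left hy (by positivity)
      _ = δℓ := by field_simp
      _ ≤ ρ := hρ
  refine ⟨(1/(1+ε)) • x + (ε/(1+ε)) • (c + ε⁻¹ • y),
    hconv hx hc (by positivity) (by positivity) (by field_simp), ?_⟩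
  match_scalars <;> field_simp

theorem discretized_packing_of_large_fat_convex
    (f : ℝ) (hf : 1 ≤ f) (ε : ℝ) (hε0 : 0 < ε) (hε1 : ε ≤ 1)
    (δℓ : ℝ) (hδℓ : 0 < δℓ) :
    ∃ δc : ℝ, 0 < δc ∧
      ∀ (n : ℕ) (P : Fin n → Set Plane),
        (∀ i, Convex ℝ (P i)) →
        (∀ i j, i ≠ j → Disjoint (P i) (P j)) →
        (∀ i, P i ⊆ square 1) →
        (∀ i, ∃ (c : Plane) (ρ : ℝ), δℓ ≤ ρ ∧ closedBall c ρ ⊆ P i ∧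
          ∃ c' : Plane, P i ⊆ closedBall c' (f * ρ)) →
        ∃ v : Fin n → Plane,
          (∀ i j, i ≠ j → Disjoint (v i +ᵥ P i) (v j +ᵥ P j)) ∧
          (∀ i, v i +ᵥ P i ⊆ square (1 + ε)) ∧
          (∀ (j k : ℤ) (i i' : Fin n), i ≠ i' →
            ¬((gridSquare δc j k ∩ (v i +ᵥ P i)).Nonempty ∧
              (gridSquare δc j k ∩ (v i' +ᵥ P i')).Nonempty)) := by
  refine ⟨ε * δℓ / 2, by positivity, ?_⟩
  intro n P hconv hdisj hsub hfat
  choose c ρ hρ hball hfar using hfat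
  have h1 : (0:ℝ) < 1 + ε := by linarith
  -- key membership lemma specialized
  have hkey : ∀ i, ∀ x ∈ P i, ∀ y : Plane, ‖y‖ ≤ ε * δℓ →
      ε • c i + x + y ∈ (1 + ε) • P i := fun i x hx y hy =>
    keyMem ε δℓ (ρ i) hε0 (hρ i) (P i) (hconv i) (c i) (hball i) hx hy
  -- scaled sets remain disjoint
  have hscaled : ∀ i j : Fin n, i ≠ j → Disjoint ((1+ε) • P i) ((1+ε) • P j) := by
    intro i j hij
    rw [Set.disjoint_left]
    rintro a ⟨p, hp, rfl⟩ ⟨q, hq, hqe⟩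
    have : q = p := smul_right_injective Plane (by positivity : (1+ε) ≠ 0) hqe
    subst this
    exact Set.disjoint_left.mp (hdisj i j hij) hp hq
  -- separation between distinct translates
  have hsep : ∀ i j : Fin n, i ≠ j → ∀ x y : Plane,
      x ∈ ε • c i +ᵥ P i → y ∈ ε • c j +ᵥ P j → dist x y ≤ 2 * (ε * δℓ) → False := by
    intro i j hij x y hx hy hd
    obtain ⟨p, hp, rfl⟩ := hx
    obtain ⟨q, hq, rfl⟩ := hy
    simp only [vadd_eq_add] at hd ⊢
    set x := ε • c i + p with hxdef
    set y := ε • c j + q with hydef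
    have hnorm : ‖(2⁻¹:ℝ) • (y - x)‖ ≤ ε * δℓ := by
      rw [norm_smul, Real.norm_eq_abs]
      have : ‖y - x‖ = dist x y := by rw [dist_eq_norm, norm_sub_rev]
      rw [this, abs_of_pos (by norm_num)]
      linarith
    have hnorm' : ‖(2⁻¹:ℝ) • (x - y)‖ ≤ ε * δℓ := by
      rw [norm_smul, Real.norm_eq_abs, norm_sub_rev]
      rwa [norm_smul, Real.norm_eq_abs] at hnorm
    have hm1 : x + (2⁻¹:ℝ) • (y - x) ∈ (1 + ε) • P i := by
      have := hkey i p hp ((2⁻¹:ℝ) • (y - x)) hnorm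
      rwa [hxdef]
    have hm2 : x + (2⁻¹:ℝ) • (y - x) ∈ (1 + ε) • P j := by
      have heq : x + (2⁻¹:ℝ) • (y - x) = ε • c j + q + (2⁻¹:ℝ) • (x - y) := by
        rw [hydef]; module
      rw [heq]
      exact hkey j q hq ((2⁻¹:ℝ) • (x - y)) hnorm'
    exact Set.disjoint_left.mp (hscaled i j hij) hm1 hm2
  refine ⟨fun i => ε • c i, ?_, ?_, ?_⟩
  · -- disjointness of translates
    intro i j hij
    rw [Set.disjoint_left]
    intro a ha hb
    exact hsep i j hij a a ha hb (by simp; positivity)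
  · -- containment in the augmented square
    intro i x hx
    obtain ⟨p, hp, rfl⟩ := hx
    have hmem : ε • c i + p + 0 ∈ (1 + ε) • P i :=
      hkey i p hp 0 (by simp; positivity)
    rw [add_zero] at hmem
    obtain ⟨z, hz, hze⟩ := hmem
    have hz0 := (hsub i hz).1
    have hz1 := (hsub i hz).2
    simp only [vadd_eq_add]; rw [← hze]
    constructor
    · show (1+ε) * z 0 ∈ Icc (0:ℝ) (1+ε)
      constructor
      · exact mul_nonneg (by linarith) hz0.1
      · nlinarith [hz0.2]
    · show (1+ε) * z 1 ∈ Icc (0:ℝ) (1+ε)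
      constructor
      · exact mul_nonneg (by linarith) hz1.1
      · nlinarith [hz1.2]
  · -- no grid square hits two objects
    intro j k i i' hii' ⟨⟨z1, hz1g, hz1⟩, ⟨z2, hz2g, hz2⟩⟩
    set δc := ε * δℓ / 2 with hδc
    have hδcpos : (0:ℝ) < δc := by positivity
    have hd0 : dist (z1 0) (z2 0) ≤ δc := by
      have := Real.dist_le_of_mem_Icc hz1g.1 hz2g.1
      calc dist (z1 0) (z2 0) ≤ ((j:ℝ) + 1) * δc - (j:ℝ) * δc := this
        _ = δc := by ring
    have hd1 : dist (z1 1) (z2 1) ≤ δc := by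
      have := Real.dist_le_of_mem_Icc hz1g.2 hz2g.2
      calc dist (z1 1) (z2 1) ≤ ((k:ℝ) + 1) * δc - (k:ℝ) * δc := this
        _ = δc := by ring
    have hdist : dist z1 z2 ≤ 2 * δc := by
      rw [EuclideanSpace.dist_eq, Fin.sum_univ_two]
      have h2 : (2 * δc) = Real.sqrt ((2 * δc)^2) := (Real.sqrt_sq (by positivity)).symm
      rw [h2]
      apply Real.sqrt_le_sqrt
      nlinarith [dist_nonneg (x := z1 0) (y := z2 0), dist_nonneg (x := z1 1) (y := z2 1)]
    exact hsep i i' hii' z1 z2 hz1 hz2 (by rw [hδc] at hdist; linarith)
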